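/- If (M →^∂ N, ·, {−,−}) is a perfect braided crossed module of Lie K-algebras, then Φ : (N ⊗ N →^Id N ⊗ N, [−,−], [−,−]) → (M →^∂ N, ·, {−,−}), with Φ₁(n ⊗ n') = {n,n'} and Φ₂(n ⊗ n') = [n,n'], is the universal central extension: for every central extension f : 𝒵 → (M →^∂ N) there exists a unique morphism h with Φ = f ∘ h. -/

import Mathlib

universe u

/-- The Lie bracket as a bilinear map. -/
def bracketMap (K : Type u) [CommRing K] (M : Type u) [LieRing M] [LieAlgebra K M] :
    M →ₗ[K] M →ₗ[K] M :=
  LinearMap.mk₂ K (fun a b => ⁅a, b⁆) add_lie smul_lie lie_add lie_smul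

/-- Axioms for a crossed module of Lie `K`-algebras `(d : M → N, act)`. -/
structure LieXMod (K : Type u) [CommRing K] (M N : Type u)
    [LieRing M] [LieAlgebra K M] [LieRing N] [LieAlgebra K N]
    (d : M →ₗ⁅K⁆ N) (act : N →ₗ[K] M →ₗ[K] M) : Prop where
  act_lie : ∀ n n' m, act ⁅n, n'⁆ m = act n (act n' m) - act n' (act n m)
  lie_act : ∀ n m m', act n ⁅m, m'⁆ = ⁅act n m, m'⁆ + ⁅m, act n m'⁆
  equivar : ∀ n m, d (act n m) = ⁅n, d m⁆
  peiffer : ∀ m m', act (d m) m' = ⁅m, m'⁆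

/-- Axioms `BLie1`–`BLie6` for a braiding on a crossed module of Lie algebras. -/
structure LieBraiding (K : Type u) [CommRing K] (M N : Type u)
    [LieRing M] [LieAlgebra K M] [LieRing N] [LieAlgebra K N]
    (d : M →ₗ⁅K⁆ N) (act : N →ₗ[K] M →ₗ[K] M)
    (br : N →ₗ[K] N →ₗ[K] M) : Prop where
  b1 : ∀ n n', d (br n n') = ⁅n, n'⁆
  b2 : ∀ m m', br (d m) (d m') = ⁅m, m'⁆
  b3 : ∀ m n, br (d m) n = - act n m
  b4 : ∀ n m, br n (d m) = act n m
  b5 : ∀ n n' n'', br n ⁅n', n''⁆ = br ⁅n, n'⁆ n'' - br ⁅n, n''⁆ n'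
  b6 : ∀ n n' n'', br ⁅n, n'⁆ n'' = br n ⁅n', n''⁆ - br n' ⁅n, n''⁆

/-- `T`, together with the bilinear pairing `t`, is the non-abelian tensor product
of the Lie algebras `A` and `B` acting on each other via `actAB` and `actBA`:
it satisfies the defining relations of the presentation and the universal property. -/
structure IsNATensor (K : Type u) [CommRing K] (A B : Type u)
    [LieRing A] [LieAlgebra K A] [LieRing B] [LieAlgebra K B]
    (actAB : A →ₗ[K] B →ₗ[K] B) (actBA : B →ₗ[K] A →ₗ[K] A)
    (T : Type u) [LieRing T] [LieAlgebra K T]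
    (t : A →ₗ[K] B →ₗ[K] T) : Prop where
  rel3a : ∀ a a' b, t ⁅a, a'⁆ b = t a (actAB a' b) - t a' (actAB a b)
  rel3b : ∀ a b b', t a ⁅b, b'⁆ = t (actBA b' a) b - t (actBA b a) b'
  rel4 : ∀ a b a' b', ⁅t a b, t a' b'⁆ = - t (actBA b a) (actAB a' b')
  lift : ∀ (C : Type u) [LieRing C] [LieAlgebra K C] (f : A →ₗ[K] B →ₗ[K] C),
      (∀ a a' b, f ⁅a, a'⁆ b = f a (actAB a' b) - f a' (actAB a b)) →
      (∀ a b b', f a ⁅b, b'⁆ = f (actBA b' a) b - f (actBA b a) b') →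
      (∀ a b a' b', ⁅f a b, f a' b'⁆ = - f (actBA b a) (actAB a' b')) →
      ∃! φ : T →ₗ⁅K⁆ C, ∀ a b, φ (t a b) = f a b

/-- `T` with pairing `t` is the non-abelian tensor square of `N` (adjoint actions). -/
def IsNATensorSq (K : Type u) [CommRing K] (N : Type u) [LieRing N] [LieAlgebra K N]
    (T : Type u) [LieRing T] [LieAlgebra K T] (t : N →ₗ[K] N →ₗ[K] T) : Prop :=
  IsNATensor K N N (bracketMap K N) (bracketMap K N) T t


section Aux

variable {K : Type u} [CommRing K] {N : Type u} [LieRing N] [LieAlgebra K N]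
  {T : Type u} [LieRing T] [LieAlgebra K T] {t : N →ₗ[K] N →ₗ[K] T}

@[simp] theorem bracketMap_apply {M : Type u} [LieRing M] [LieAlgebra K M] (a b : M) :
    bracketMap K M a b = ⁅a, b⁆ := rfl

theorem tensor_span_top
    (hT : IsNATensor K N N (bracketMap K N) (bracketMap K N) T t) :
    Submodule.span K {x : T | ∃ a b : N, x = t a b} = ⊤ := by
  set s : Set T := {x : T | ∃ a b : N, x = t a b} with hs
  have hgen : ∀ (a b : N) (y : T), y ∈ Submodule.span K s →
      ⁅t a b, y⁆ ∈ Submodule.span K s := by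
    intro a b y hy
    induction hy using Submodule.span_induction with
    | mem z hz =>
        obtain ⟨a', b', rfl⟩ := hz
        rw [hT.rel4]
        have : (bracketMap K N) b a = -⁅a, b⁆ := by
          have h := lie_skew b a
          simpa using h.symm
        rw [this, map_neg, LinearMap.neg_apply, neg_neg]
        exact Submodule.subset_span ⟨_, _, rfl⟩
    | zero => simp
    | add u v _ _ hu hv => rw [lie_add]; exact Submodule.add_mem _ hu hv
    | smul c u _ hu => rw [lie_smul]; exact Submodule.smul_mem _ c hu
  have hlie : ∀ {x y : T}, x ∈ Submodule.span K s → y ∈ Submodule.span K s →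
      ⁅x, y⁆ ∈ Submodule.span K s := by
    intro x y hx hy
    induction hx using Submodule.span_induction with
    | mem z hz => obtain ⟨a, b, rfl⟩ := hz; exact hgen a b y hy
    | zero => simp
    | add u v _ _ hu hv => rw [add_lie]; exact Submodule.add_mem _ hu hv
    | smul c u _ hu => rw [smul_lie]; exact Submodule.smul_mem _ c hu
  set S : LieSubalgebra K T :=
    { toSubmodule := Submodule.span K s
      lie_mem' := hlie } with hS
  have hmem : ∀ a b : N, t a b ∈ S := fun a b => Submodule.subset_span ⟨a, b, rfl⟩
  set t' : N →ₗ[K] N →ₗ[K] S :=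
    LinearMap.mk₂ K (fun a b => (⟨t a b, hmem a b⟩ : S))
      (fun m₁ m₂ n => by ext; simp)
      (fun c m n => Subtype.ext (by show (t (c • m)) n = c • (t m) n; simp))
      (fun m n₁ n₂ => by ext; simp)
      (fun c m n => Subtype.ext (by show (t m) (c • n) = c • (t m) n; simp)) with ht'
  have h3a : ∀ a a' b, t' ⁅a, a'⁆ b
      = t' a (bracketMap K N a' b) - t' a' (bracketMap K N a b) := by
    intro a a' b
    ext
    simpa [ht'] using hT.rel3a a a' b
  have h3b : ∀ a b b', t' a ⁅b, b'⁆
      = t' (bracketMap K N b' a) b - t' (bracketMap K N b a) b' := by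
    intro a b b'
    ext
    simpa [ht'] using hT.rel3b a b b'
  have h4 : ∀ a b a' b', ⁅t' a b, t' a' b'⁆
      = - t' (bracketMap K N b a) (bracketMap K N a' b') := by
    intro a b a' b'
    ext
    simpa [ht'] using hT.rel4 a b a' b'
  obtain ⟨φ, hφ, -⟩ := hT.lift S t' h3a h3b h4
  obtain ⟨ψ, -, huniq⟩ := hT.lift T t hT.rel3a hT.rel3b hT.rel4
  have h₁ : S.incl.comp φ = ψ := huniq _ (by
    intro a b
    simp only [LieHom.comp_apply, hφ]
    rfl)
  have h₂ : (LieHom.id : T →ₗ⁅K⁆ T) = ψ := huniq _ (fun a b => rfl)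
  have key : ∀ x : T, x ∈ S := by
    intro x
    have : S.incl.comp φ x = (LieHom.id : T →ₗ⁅K⁆ T) x := by rw [h₁, h₂]
    have hx : (φ x : T) = x := this
    rw [← hx]
    exact (φ x).2
  exact Submodule.eq_top_iff'.2 key

theorem tensor_ext
    (hT : IsNATensor K N N (bracketMap K N) (bracketMap K N) T t)
    {C : Type u} [AddCommGroup C] [Module K C] {f g : T →ₗ[K] C}
    (h : ∀ a b : N, f (t a b) = g (t a b)) : f = g := by
  apply LinearMap.ext_on (tensor_span_top hT)
  rintro x ⟨a, b, rfl⟩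
  exact h a b

end Aux

theorem universal_central_extension_of_perfect (K : Type u) [CommRing K] (M N : Type u) [LieRing M] [LieAlgebra K M]
    [LieRing N] [LieAlgebra K N] (d : M →ₗ⁅K⁆ N) (act : N →ₗ[K] M →ₗ[K] M)
    (br : N →ₗ[K] N →ₗ[K] M) (hX : LieXMod K M N d act)
    (hB : LieBraiding K M N d act br)
    (hperf : LieSubalgebra.lieSpan K M {x : M | ∃ n n' : N, x = br n n'} = ⊤ ∧
      LieSubalgebra.lieSpan K N {x : N | ∃ a b : N, x = ⁅a, b⁆} = ⊤)
    (T : Type u) [LieRing T] [LieAlgebra K T] (t : N →ₗ[K] N →ₗ[K] T)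
    (hT : IsNATensorSq K N T t) (Φ₁ : T →ₗ⁅K⁆ M) (Φ₂ : T →ₗ⁅K⁆ N)
    (hΦ₁ : ∀ n n' : N, Φ₁ (t n n') = br n n')
    (hΦ₂ : ∀ n n' : N, Φ₂ (t n n') = ⁅n, n'⁆) :
    Function.Surjective Φ₁ ∧ Function.Surjective Φ₂ ∧
      (∀ x : T, Φ₁ x = 0 → ∀ y : T, ⁅y, x⁆ = 0) ∧
      (∀ x : T, Φ₂ x = 0 → ∀ y : T, ⁅x, y⁆ = 0 ∧ ⁅y, x⁆ = 0) ∧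
      ∀ (X₁ X₂ : Type u) [LieRing X₁] [LieAlgebra K X₁] [LieRing X₂] [LieAlgebra K X₂]
        (δX : X₁ →ₗ⁅K⁆ X₂) (actX : X₂ →ₗ[K] X₁ →ₗ[K] X₁) (brX : X₂ →ₗ[K] X₂ →ₗ[K] X₁),
        LieXMod K X₁ X₂ δX actX → LieBraiding K X₁ X₂ δX actX brX →
        ∀ (f₁ : X₁ →ₗ⁅K⁆ M) (f₂ : X₂ →ₗ⁅K⁆ N),
        (∀ (x : X₂) (ξ : X₁), f₁ (actX x ξ) = act (f₂ x) (f₁ ξ)) →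
        (∀ ξ : X₁, d (f₁ ξ) = f₂ (δX ξ)) →
        (∀ x y : X₂, f₁ (brX x y) = br (f₂ x) (f₂ y)) →
        Function.Surjective f₁ → Function.Surjective f₂ →
        (∀ ξ : X₁, f₁ ξ = 0 → ∀ x : X₂, actX x ξ = 0) →
        (∀ x : X₂, f₂ x = 0 → ∀ y : X₂, brX x y = 0 ∧ brX y x = 0) →
        ∃! h : (T →ₗ⁅K⁆ X₁) × (T →ₗ⁅K⁆ X₂),
          (∀ x y : T, h.1 ⁅x, y⁆ = actX (h.2 x) (h.1 y)) ∧
          (∀ x : T, δX (h.1 x) = h.2 x) ∧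
          (∀ x y : T, h.1 ⁅x, y⁆ = brX (h.2 x) (h.2 y)) ∧
          (∀ x : T, f₁ (h.1 x) = Φ₁ x) ∧ (∀ x : T, f₂ (h.2 x) = Φ₂ x) := by
  have hT' : IsNATensor K N N (bracketMap K N) (bracketMap K N) T t := hT
  -- d ∘ Φ₁ = Φ₂
  have hdΦ : ∀ x : T, d (Φ₁ x) = Φ₂ x := by
    have h : (d.toLinearMap ∘ₗ Φ₁.toLinearMap) = Φ₂.toLinearMap := by
      apply tensor_ext hT'
      intro a b
      simp [hΦ₁, hΦ₂, hB.b1]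
    intro x
    exact LinearMap.congr_fun h x
  -- key lemma: brackets in T
  have hL : ∀ x y : T, ⁅x, y⁆ = t (Φ₂ x) (Φ₂ y) := by
    have h : bracketMap K T = t.compl₁₂ Φ₂.toLinearMap Φ₂.toLinearMap := by
      apply tensor_ext hT'
      intro a b
      apply tensor_ext hT'
      intro a' b'
      simp only [bracketMap_apply, LinearMap.compl₁₂_apply, LieHom.coe_toLinearMap, hΦ₂]
      rw [hT'.rel4]
      have : (bracketMap K N) b a = -⁅a, b⁆ := by simpa using (lie_skew b a).symm
      rw [this, map_neg, LinearMap.neg_apply, neg_neg]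
      rfl
    intro x y
    exact LinearMap.congr_fun (LinearMap.congr_fun h x) y
  -- surjectivity of Φ₂
  have hsurj₂ : Function.Surjective Φ₂ := by
    intro y
    have hle : LieSubalgebra.lieSpan K N {x : N | ∃ a b : N, x = ⁅a, b⁆} ≤ Φ₂.range := by
      rw [LieSubalgebra.lieSpan_le]
      rintro x ⟨a, b, rfl⟩
      exact ⟨t a b, hΦ₂ a b⟩
    rw [hperf.2] at hle
    exact (Φ₂.mem_range _).1 (hle (LieSubalgebra.mem_top y))
  -- surjectivity of Φ₁
  have hsurj₁ : Function.Surjective Φ₁ := by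
    intro y
    have hle : LieSubalgebra.lieSpan K M {x : M | ∃ n n' : N, x = br n n'} ≤ Φ₁.range := by
      rw [LieSubalgebra.lieSpan_le]
      rintro x ⟨a, b, rfl⟩
      exact ⟨t a b, hΦ₁ a b⟩
    rw [hperf.1] at hle
    exact (Φ₁.mem_range _).1 (hle (LieSubalgebra.mem_top y))
  refine ⟨hsurj₁, hsurj₂, ?_, ?_, ?_⟩
  · intro x hx y
    have hx2 : Φ₂ x = 0 := by rw [← hdΦ x, hx]; simp
    rw [hL, hx2, map_zero]
  · intro x hx y
    constructor
    · rw [hL, hx, map_zero, LinearMap.zero_apply]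
    · rw [hL, hx, map_zero]
  · intro X₁ X₂ _ _ _ _ δX actX brX hXX hBX f₁ f₂ hf_act hf_d hf_br hf₁s hf₂s hker₁ hker₂
    -- a section of f₂
    have hsec : ∀ n : N, f₂ ((hf₂s n).choose) = n := fun n => (hf₂s n).choose_spec
    set sec : N → X₂ := fun n => (hf₂s n).choose with hsecdef
    have hsec : ∀ n : N, f₂ (sec n) = n := hsec
    -- brX only depends on images under f₂
    have W : ∀ u u' v v' : X₂, f₂ u = f₂ u' → f₂ v = f₂ v' → brX u v = brX u' v' := by
      intro u u' v v' h1 h2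
      have e1 : brX (u - u') v = 0 := (hker₂ (u - u') (by simp [h1]) v).1
      have e2 : brX u' (v - v') = 0 := (hker₂ (v - v') (by simp [h2]) u').2
      have e1' : brX u v = brX u' v := by
        rw [map_sub, LinearMap.sub_apply, sub_eq_zero] at e1
        exact e1
      have e2' : brX u' v = brX u' v' := by
        rw [map_sub, sub_eq_zero] at e2
        exact e2
      rw [e1', e2']
    -- the pairing g
    set g : N →ₗ[K] N →ₗ[K] X₁ :=
      LinearMap.mk₂ K (fun n n' => brX (sec n) (sec n'))
        (fun m₁ m₂ n => by
          beta_reduce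
          rw [W (sec (m₁ + m₂)) (sec m₁ + sec m₂) (sec n) (sec n) (by simp [hsec]) rfl,
            map_add, LinearMap.add_apply])
        (fun c m n => by
          beta_reduce
          rw [W (sec (c • m)) (c • sec m) (sec n) (sec n) (by simp [hsec]) rfl,
            map_smul, LinearMap.smul_apply])
        (fun m n₁ n₂ => by
          beta_reduce
          rw [W (sec m) (sec m) (sec (n₁ + n₂)) (sec n₁ + sec n₂) rfl (by simp [hsec]),
            map_add])
        (fun c m n => by
          beta_reduce
          rw [W (sec m) (sec m) (sec (c • n)) (c • sec n) rfl (by simp [hsec]),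
            map_smul]) with hgdef
    have hgapp : ∀ n n' : N, g n n' = brX (sec n) (sec n') := fun n n' => rfl
    have hgW : ∀ (n n' : N) (u v : X₂), f₂ u = n → f₂ v = n' → g n n' = brX u v := by
      intro n n' u v hu hv
      rw [hgapp]
      exact W _ _ _ _ (by rw [hsec, hu]) (by rw [hsec, hv])
    -- relations for g
    have g3a : ∀ a a' b : N, g ⁅a, a'⁆ b
        = g a (bracketMap K N a' b) - g a' (bracketMap K N a b) := by
      intro a a' b
      rw [hgW ⁅a, a'⁆ b ⁅sec a, sec a'⁆ (sec b) (by simp [hsec]) (hsec b),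
        hBX.b6 (sec a) (sec a') (sec b)]
      rw [hgW a (bracketMap K N a' b) (sec a) ⁅sec a', sec b⁆ (hsec a) (by simp [hsec]),
        hgW a' (bracketMap K N a b) (sec a') ⁅sec a, sec b⁆ (hsec a') (by simp [hsec])]
    have g3b : ∀ a b b' : N, g a ⁅b, b'⁆
        = g (bracketMap K N b' a) b - g (bracketMap K N b a) b' := by
      intro a b b'
      rw [hgW a ⁅b, b'⁆ (sec a) ⁅sec b, sec b'⁆ (hsec a) (by simp [hsec]),
        hBX.b5 (sec a) (sec b) (sec b')]
      rw [hgW (bracketMap K N b' a) b (-⁅sec a, sec b'⁆) (sec b)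
          (by simp [hsec, ← lie_skew (f₂ (sec b')) (f₂ (sec a))]) (hsec b),
        hgW (bracketMap K N b a) b' (-⁅sec a, sec b⁆) (sec b')
          (by simp [hsec, ← lie_skew (f₂ (sec b)) (f₂ (sec a))]) (hsec b')]
      simp only [map_neg, LinearMap.neg_apply]
      abel
    have g4 : ∀ a b a' b' : N, ⁅g a b, g a' b'⁆
        = - g (bracketMap K N b a) (bracketMap K N a' b') := by
      intro a b a' b'
      rw [hgapp, hgapp]
      have e1 : ⁅brX (sec a) (sec b), brX (sec a') (sec b')⁆
          = actX (δX (brX (sec a) (sec b))) (brX (sec a') (sec b')) :=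
        (hXX.peiffer _ _).symm
      rw [e1, hBX.b1, ← hBX.b4 ⁅sec a, sec b⁆ (brX (sec a') (sec b')), hBX.b1]
      rw [hgW (bracketMap K N b a) (bracketMap K N a' b') ⁅sec b, sec a⁆
          ⁅sec a', sec b'⁆ (by simp [hsec]) (by simp [hsec])]
      have : (⁅sec b, sec a⁆ : X₂) = -⁅sec a, sec b⁆ := by
        simpa using (lie_skew (sec b) (sec a)).symm
      rw [this, map_neg, LinearMap.neg_apply, neg_neg]
    obtain ⟨h₁, hh₁, -⟩ := hT'.lift X₁ g g3a g3b g4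
    set h₂ : T →ₗ⁅K⁆ X₂ := δX.comp h₁ with hh₂def
    have hδ : ∀ x : T, δX (h₁ x) = h₂ x := fun x => rfl
    -- f₂ ∘ h₂ = Φ₂
    have hf₂h₂ : ∀ x : T, f₂ (h₂ x) = Φ₂ x := by
      have h : (f₂.toLinearMap ∘ₗ δX.toLinearMap ∘ₗ h₁.toLinearMap) = Φ₂.toLinearMap := by
        apply tensor_ext hT'
        intro a b
        simp only [LinearMap.comp_apply, LieHom.coe_toLinearMap, hh₁, hΦ₂, hgapp, hBX.b1]
        rw [LieHom.map_lie, hsec, hsec]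
      intro x
      exact LinearMap.congr_fun h x
    -- f₁ ∘ h₁ = Φ₁
    have hf₁h₁ : ∀ x : T, f₁ (h₁ x) = Φ₁ x := by
      have h : (f₁.toLinearMap ∘ₗ h₁.toLinearMap) = Φ₁.toLinearMap := by
        apply tensor_ext hT'
        intro a b
        simp only [LinearMap.comp_apply, LieHom.coe_toLinearMap, hh₁, hΦ₁, hgapp]
        rw [hf_br, hsec, hsec]
      intro x
      exact LinearMap.congr_fun h x
    -- bracket compatibility
    have hbr : ∀ x y : T, h₁ ⁅x, y⁆ = brX (h₂ x) (h₂ y) := by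
      intro x y
      rw [hL x y, hh₁]
      exact (hgW (Φ₂ x) (Φ₂ y) (h₂ x) (h₂ y) (hf₂h₂ x) (hf₂h₂ y)).symm ▸
        (hgW (Φ₂ x) (Φ₂ y) (h₂ x) (h₂ y) (hf₂h₂ x) (hf₂h₂ y))
    have hact : ∀ x y : T, h₁ ⁅x, y⁆ = actX (h₂ x) (h₁ y) := by
      intro x y
      rw [hbr x y, ← hδ y]
      exact hBX.b4 (h₂ x) (h₁ y)
    refine ⟨⟨h₁, h₂⟩, ⟨hact, hδ, hbr, hf₁h₁, hf₂h₂⟩, ?_⟩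
    rintro ⟨h₁', h₂'⟩ ⟨hact', hδ', hbr', hf₁', hf₂'⟩
    have e1 : h₁' = h₁ := by
      have h : h₁'.toLinearMap = h₁.toLinearMap := by
        apply tensor_ext hT'
        intro a b
        obtain ⟨x, hx⟩ := hsurj₂ a
        obtain ⟨y, hy⟩ := hsurj₂ b
        have htab : t a b = ⁅x, y⁆ := by rw [hL x y, hx, hy]
        simp only [LieHom.coe_toLinearMap, htab]
        rw [hbr' x y, hbr x y]
        exact W _ _ _ _ (by rw [hf₂' x, hf₂h₂ x]) (by rw [hf₂' y, hf₂h₂ y])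
      exact LieHom.ext (fun x => LinearMap.congr_fun h x)
    have e2 : h₂' = h₂ := by
      apply LieHom.ext
      intro x
      rw [← hδ' x, e1, hδ x]
    simp [e1, e2]
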